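/- Let {A_i} be a partition of ℕ into infinite sets with A_i < A_j for i < j, f_i : A_i → ℕ the order isomorphisms, ξ(k) the index with k ∈ A_{ξ(k)}. For any increasing g : ℕ → ℕ define g'(n) = f_n⁻¹(g(n)). Then for all n, k ∈ ℕ with n ≥ ξ(k) and k ≥ g'(n), we have f_{ξ(k)}(k) ≥ g(ξ(k)). -/
import Mathlib


/-- Key computation: with `{A i}` a partition of `ℕ` into infinite sets with `A i < A j`
for `i < j`, `f i : A i ≃o ℕ` the order isomorphisms, `ξ k` the index with `k ∈ A (ξ k)`,
and `g : ℕ → ℕ` increasing with `g' n = (f n)⁻¹ (g n)`: for all `n, k` with `ξ k ≤ n`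
and `g' n ≤ k` we have `g (ξ k) ≤ f (ξ k) k`. -/
theorem key_computation (A : ℕ → Set ℕ)
    (hInf : ∀ i, (A i).Infinite)
    (hDisj : Pairwise fun i j => Disjoint (A i) (A j))
    (hUnion : (⋃ i, A i) = Set.univ)
    (hlt : ∀ i j, i < j → ∀ gij : (A i) ≃o (A j), ∀ n : A i, (n : ℕ) < (gij n : ℕ))
    (f : ∀ i, (A i) ≃o ℕ)
    (ξ : ℕ → ℕ) (hξ : ∀ k, k ∈ A (ξ k))
    (g : ℕ → ℕ) (hg : StrictMono g)
    (n k : ℕ) (hn : ξ k ≤ n) (hk : (((f n).symm (g n) : A n) : ℕ) ≤ k) :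
    g (ξ k) ≤ (f (ξ k)) ⟨k, hξ k⟩ := by
  set i := ξ k with hi
  have key : (((f i).symm (g i) : A i) : ℕ) ≤ k := by
    rcases eq_or_lt_of_le hn with h | h
    · rw [h]; exact hk
    · have h1 := hlt i n h ((f i).trans (f n).symm) ((f i).symm (g i))
      simp only [OrderIso.trans_apply, OrderIso.apply_symm_apply] at h1
      have h2 : (f n).symm (g i) ≤ (f n).symm (g n) :=
        (f n).symm.monotone (hg.monotone h.le)
      exact le_trans (le_trans h1.le h2) hk
  have hle : (f i).symm (g i) ≤ (⟨k, hξ k⟩ : A i) := key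
  calc g i = f i ((f i).symm (g i)) := by simp
    _ ≤ f i ⟨k, hξ k⟩ := (f i).monotone hle
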